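/- Let A be the adjacency matrix of a strongly connected k-regular normal digraph Γ on n vertices with θ_min the minimum real part of eigenvalues of A. If a coclique C attains the bound |C| = n(−θ_min)/(k − θ_min), then for every vertex x ∉ C, the number of arcs from x into C plus the number of arcs from C into x equals −2θ_min. -/

import Mathlib

open Matrix Finset
open scoped ComplexOrder

lemma normal_sum_eig {N : ℕ} (M : Matrix (Fin N) (Fin N) ℂ)
    (hnormal : M * Mᴴ = Mᴴ * M) (μ : ℂ) (w : Fin N → ℂ) (hw : w ≠ 0)
    (hmu : (M + Mᴴ) *ᵥ w = μ • w) :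
    ∃ θ ∈ spectrum ℂ M, μ = θ + (starRingEnd ℂ) θ := by
  classical
  set Bc := M + Mᴴ with hBc
  have hcomm : M * Bc = Bc * M := by
    simp only [hBc, mul_add, add_mul, hnormal]
  set E : Submodule ℂ (Fin N → ℂ) := LinearMap.ker ((Bc - μ • 1).mulVecLin) with hE
  have hmemE : ∀ v : Fin N → ℂ, v ∈ E ↔ Bc *ᵥ v = μ • v := by
    intro v
    simp only [hE, LinearMap.mem_ker, mulVecLin_apply, sub_mulVec, smul_mulVec,
      one_mulVec, sub_eq_zero]
  have hwE : w ∈ E := (hmemE w).2 hmu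
  have hinv : ∀ v ∈ E, M *ᵥ v ∈ E := by
    intro v hv
    rw [hmemE] at hv ⊢
    rw [mulVec_mulVec, ← hcomm, ← mulVec_mulVec, hv, mulVec_smul]
  have : Nontrivial E := ⟨⟨⟨w, hwE⟩, 0, by simpa [Subtype.ext_iff] using hw⟩⟩
  let g : Module.End ℂ E := (M.mulVecLin).restrict (p := E) (q := E) hinv
  obtain ⟨θ, hθ⟩ := Module.End.exists_eigenvalue g
  obtain ⟨⟨u, huE⟩, huev⟩ := hθ.exists_hasEigenvector
  have hu0 : u ≠ 0 := by
    intro h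
    exact huev.2 (by simp [Subtype.ext_iff, h])
  have huM : M *ᵥ u = θ • u := by
    have := huev.apply_eq_smul
    exact congrArg Subtype.val this
  have huB : Bc *ᵥ u = μ • u := (hmemE u).1 huE
  -- θ is in the spectrum of M
  have hspec : θ ∈ spectrum ℂ M := by
    rw [spectrum.mem_iff]
    intro hunit
    obtain ⟨U, hU⟩ := hunit
    have hker : (algebraMap ℂ (Matrix (Fin N) (Fin N) ℂ) θ - M) *ᵥ u = 0 := by
      rw [Algebra.algebraMap_eq_smul_one, sub_mulVec, smul_mulVec, one_mulVec, huM,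
        sub_self]
    have : u = 0 := by
      have h1 : ((↑U⁻¹ : Matrix (Fin N) (Fin N) ℂ) * (algebraMap ℂ _ θ - M)) *ᵥ u = u := by
        rw [← hU, U.inv_mul, one_mulVec]
      rw [← h1, ← mulVec_mulVec, hker, mulVec_zero]
    exact hu0 this
  refine ⟨θ, hspec, ?_⟩
  -- compute μ = θ + conj θ
  have hs : star u ⬝ᵥ u ≠ 0 := fun h => hu0 (dotProduct_star_self_eq_zero.1 h)
  have hMH : Mᴴ *ᵥ u = (μ - θ) • u := by
    have : M *ᵥ u + Mᴴ *ᵥ u = μ • u := by rw [← add_mulVec, ← hBc, huB]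
    rw [huM] at this
    rw [sub_smul, ← this]
    abel
  have key : star u ⬝ᵥ (Mᴴ *ᵥ u) = star (star u ⬝ᵥ (M *ᵥ u)) := by
    rw [star_dotProduct, star_mulVec, conjTranspose_conjTranspose, dotProduct_mulVec]
  rw [hMH, huM] at key
  rw [dotProduct_smul, dotProduct_smul, smul_eq_mul, smul_eq_mul, star_mul'] at key
  rw [← star_dotProduct] at key
  have : μ - θ = star θ := mul_right_cancel₀ hs key
  rw [RCLike.star_def] at this
  linear_combination this

lemma psd_shift {N : ℕ} (θmin : ℝ) (A : Matrix (Fin N) (Fin N) ℝ)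
    (hnormal : A * Aᵀ = Aᵀ * A)
    (hmin_le : ∀ θ ∈ spectrum ℂ (A.map Complex.ofReal), θmin ≤ θ.re) :
    PosSemidef (A + Aᵀ - (2*θmin) • (1 : Matrix (Fin N) (Fin N) ℝ)) := by
  classical
  set Bτ := A + Aᵀ - (2*θmin) • (1 : Matrix (Fin N) (Fin N) ℝ) with hBτ
  have hherm : Bτ.IsHermitian := by
    ext i j
    simp only [hBτ, conjTranspose_apply, Matrix.sub_apply, Matrix.add_apply, transpose_apply, Matrix.smul_apply,
      one_apply, star_trivial, smul_eq_mul]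
    by_cases h : i = j <;> simp [h, eq_comm] <;> ring
  rw [hherm.posSemidef_iff_eigenvalues_nonneg]
  intro i
  set lam := hherm.eigenvalues i with hlam
  set v : Fin N → ℝ := ⇑(hherm.eigenvectorBasis i) with hv
  have hveq : Bτ *ᵥ v = lam • v := hherm.mulVec_eigenvectorBasis i
  have hvne : v ≠ 0 := by
    have := hherm.eigenvectorBasis.orthonormal.ne_zero i
    intro h
    apply this
    ext j
    exact congrFun h j
  have hB : (A + Aᵀ) *ᵥ v = (lam + 2*θmin) • v := by
    have h2 : (A + Aᵀ) *ᵥ v - (2*θmin) • v = lam • v := by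
      rw [← hveq, hBτ, sub_mulVec, smul_mulVec, one_mulVec]
    have := sub_eq_iff_eq_add.mp h2
    rw [this, add_smul]
  set M := A.map Complex.ofReal with hM
  have hMH : Mᴴ = Aᵀ.map Complex.ofReal := by
    ext i j
    simp [hM, conjTranspose_apply, Complex.conj_ofReal]
  have hMnormal : M * Mᴴ = Mᴴ * M := by
    rw [hMH]
    ext i j
    have h := Matrix.ext_iff.2 hnormal i j
    simp only [mul_apply, transpose_apply] at h ⊢
    simp only [hM, map_apply, transpose_apply, ← Complex.ofReal_mul, ← Complex.ofReal_sum]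
    exact_mod_cast h
  set w : Fin N → ℂ := fun j => (v j : ℂ) with hw
  have hwne : w ≠ 0 := by
    intro h
    apply hvne
    ext j
    have := congrFun h j
    simpa [hw] using this
  have hMw : (M + Mᴴ) *ᵥ w = ((lam + 2*θmin : ℝ) : ℂ) • w := by
    rw [hMH]
    ext j
    have h := congrFun hB j
    simp only [mulVec, dotProduct, Matrix.add_apply, Pi.smul_apply, smul_eq_mul, transpose_apply] at h
    simp only [mulVec, dotProduct, Matrix.add_apply, map_apply, transpose_apply, Pi.smul_apply,
      smul_eq_mul, hw, hM]
    push_cast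
    have h' := congrArg (fun r : ℝ => (r : ℂ)) h
    push_cast at h'
    exact h'
  obtain ⟨θ, hθspec, hθeq⟩ := normal_sum_eig M hMnormal _ w hwne hMw
  have hre : lam + 2*θmin = 2 * θ.re := by
    have := congrArg Complex.re hθeq
    simp only [Complex.ofReal_add, Complex.add_re, Complex.conj_re, Complex.ofReal_re,
      Complex.ofReal_mul, Complex.mul_re, Complex.ofReal_im] at this
    linarith
  have := hmin_le θ hθspec
  show (0:ℝ) ≤ lam
  linarith

/-- Equality case of Hoffman's coclique bound: every vertex outside the coclique has
in-count plus out-count into the coclique equal to `-2 θmin`. -/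
theorem hoffman_coclique_bound_equality
    (N : ℕ) (k θmin : ℝ) (A : Matrix (Fin N) (Fin N) ℝ)
    (h01 : ∀ i j, A i j = 0 ∨ A i j = 1)
    (hdiag : ∀ i, A i i = 0)
    (hnormal : A * Aᵀ = Aᵀ * A)
    (hrow : ∀ i, ∑ j, A i j = k)
    (hcol : ∀ i, ∑ j, A j i = k)
    (hconn : ∀ i j : Fin N, Relation.ReflTransGen (fun x y => A x y = 1) i j)
    (hedge : ∃ i j, A i j = 1)
    (hmin_mem : ∃ θ ∈ spectrum ℂ (A.map Complex.ofReal), θ.re = θmin)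
    (hmin_le : ∀ θ ∈ spectrum ℂ (A.map Complex.ofReal), θmin ≤ θ.re)
    (C : Finset (Fin N))
    (hC : ∀ x ∈ C, ∀ y ∈ C, A x y = 0)
    (heq : (C.card : ℝ) = (N : ℝ) * (-θmin) / (k - θmin)) :
    ∀ x ∉ C, (∑ y ∈ C, A x y) + (∑ y ∈ C, A y x) = -2 * θmin := by
  intro x hx
  classical
  have hPSD := psd_shift θmin A hnormal hmin_le
  set B := A + Aᵀ with hB
  set Bτ := A + Aᵀ - (2*θmin) • (1 : Matrix (Fin N) (Fin N) ℝ) with hBτ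
  have hnonneg : ∀ i j, (0:ℝ) ≤ A i j := by
    intro i j; rcases h01 i j with h | h <;> rw [h] <;> norm_num
  -- θmin ≤ 0
  have hθ0 : θmin ≤ 0 := by
    have h := hPSD.dotProduct_mulVec_nonneg (Pi.single x 1)
    have hval : star (Pi.single x (1:ℝ)) ⬝ᵥ (Bτ *ᵥ Pi.single x 1) = -(2*θmin) := by
      simp [dotProduct, mulVec, Pi.single_apply, Finset.sum_ite_eq', hBτ, Matrix.sub_apply,
        Matrix.add_apply, transpose_apply, Matrix.smul_apply, one_apply, hdiag x, mul_ite, ite_mul]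
    rw [hval] at h
    linarith
  -- k ≥ 1
  have hk1 : (1:ℝ) ≤ k := by
    obtain ⟨i, j, hij⟩ := hedge
    calc (1:ℝ) = A i j := hij.symm
    _ ≤ ∑ l, A i l := Finset.single_le_sum (fun l _ => hnonneg i l) (Finset.mem_univ j)
    _ = k := hrow i
  have hkθ : (0:ℝ) < k - θmin := by linarith
  have hcard : (C.card : ℝ) * (k - θmin) = (N:ℝ) * (-θmin) := by
    rw [heq]; field_simp
  have hN : (0:ℝ) < N := by exact_mod_cast Nat.cast_pos.mpr x.pos
  -- vectors
  set c : Fin N → ℝ := fun i => if i ∈ C then 1 else 0 with hc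
  set one : Fin N → ℝ := fun _ => 1 with hone
  set α : ℝ := (C.card : ℝ) / N with hα
  set z : Fin N → ℝ := c - α • one with hz
  -- indicator sum lemmas
  have hsumc : ∀ f : Fin N → ℝ, ∑ i, c i * f i = ∑ i ∈ C, f i := by
    intro f
    simp [hc, ite_mul, Finset.sum_ite_mem]
  have hsumc' : ∀ f : Fin N → ℝ, ∑ i, f i * c i = ∑ i ∈ C, f i := by
    intro f
    simp [hc, mul_ite, Finset.sum_ite_mem]
  -- B row/col sums
  have hBone : B *ᵥ one = (2*k) • one := by
    funext i
    simp only [mulVec, dotProduct, hB, Matrix.add_apply, transpose_apply, hone, mul_one,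
      Pi.smul_apply, smul_eq_mul, Finset.sum_add_distrib, hrow i, hcol i]
    ring
  have honeB : one ᵥ* B = (2*k) • one := by
    funext j
    simp only [vecMul, dotProduct, hB, Matrix.add_apply, transpose_apply, hone, one_mul,
      Pi.smul_apply, smul_eq_mul, Finset.sum_add_distrib, hrow j, hcol j]
    ring
  -- basic dot products
  have hNne : (N:ℝ) ≠ 0 := ne_of_gt hN
  have hcsum0 : ∑ i, c i = (C.card : ℝ) := by
    simp [hc, Finset.sum_ite_mem]
  have hcone : c ⬝ᵥ one = (C.card : ℝ) := by
    simp only [dotProduct, hone, mul_one]; exact hcsum0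
  have honec : one ⬝ᵥ c = (C.card : ℝ) := by
    simp only [dotProduct, hone, one_mul]; exact hcsum0
  have hcc : c ⬝ᵥ c = (C.card : ℝ) := by
    simp only [dotProduct, hsumc]
    simp [hc]
  have honeone : one ⬝ᵥ one = (N : ℝ) := by
    simp [dotProduct, hone]
  have hcBc : c ⬝ᵥ (B *ᵥ c) = 0 := by
    simp only [dotProduct, mulVec, hsumc]
    refine Finset.sum_eq_zero fun i hi => ?_
    simp only [dotProduct, hsumc']
    refine Finset.sum_eq_zero fun j hj => ?_
    simp [hB, Matrix.add_apply, transpose_apply, hC i hi j hj, hC j hj i hi]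
  have hcB1 : c ⬝ᵥ (B *ᵥ one) = 2*k*(C.card : ℝ) := by
    rw [hBone, dotProduct_smul, hcone, smul_eq_mul]
  have h1Bc : one ⬝ᵥ (B *ᵥ c) = 2*k*(C.card : ℝ) := by
    rw [dotProduct_mulVec, honeB, smul_dotProduct, honec, smul_eq_mul]
  have h1B1 : one ⬝ᵥ (B *ᵥ one) = 2*k*(N:ℝ) := by
    rw [hBone, dotProduct_smul, honeone, smul_eq_mul]
  -- key algebraic identities
  have hαN : α * (N:ℝ) = (C.card : ℝ) := by
    rw [hα]; field_simp
  have hα2 : α * (k - θmin) = -θmin := by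
    rw [hα]
    rw [div_mul_eq_mul_div, div_eq_iff hNne]
    linarith [hcard]
  -- quadratic form vanishes
  have e2 : B *ᵥ z = B *ᵥ c - α • (B *ᵥ one) := by
    rw [hz, mulVec_sub, mulVec_smul]
  have hquad : z ⬝ᵥ (Bτ *ᵥ z) = 0 := by
    have e1 : Bτ *ᵥ z = B *ᵥ z - (2*θmin) • z := by
      rw [hBτ, sub_mulVec, smul_mulVec, one_mulVec, hB]
    rw [e1, dotProduct_sub, dotProduct_smul]
    have e3 : z ⬝ᵥ (B *ᵥ z) = c ⬝ᵥ (B *ᵥ c) - α * (c ⬝ᵥ (B *ᵥ one))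
        - α * (one ⬝ᵥ (B *ᵥ c)) + α * α * (one ⬝ᵥ (B *ᵥ one)) := by
      rw [e2, hz]
      simp only [sub_dotProduct, dotProduct_sub, smul_dotProduct, dotProduct_smul, smul_eq_mul]
      ring
    have e4 : z ⬝ᵥ z = c ⬝ᵥ c - α * (c ⬝ᵥ one) - α * (one ⬝ᵥ c) + α * α * (one ⬝ᵥ one) := by
      rw [hz]
      simp only [sub_dotProduct, dotProduct_sub, smul_dotProduct, dotProduct_smul, smul_eq_mul]
      ring
    rw [e3, e4, hcBc, hcB1, h1Bc, h1B1, hcc, hcone, honec, honeone, smul_eq_mul]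
    linear_combination ((2*k - 2*θmin) * α) * hαN + (-2*(C.card:ℝ)) * hα2
  have hzero : Bτ *ᵥ z = 0 := by
    have h := (hPSD.dotProduct_mulVec_zero_iff z).mp
    apply h
    rw [star_trivial]
    exact hquad
  -- evaluate at x
  have heval : (Bτ *ᵥ z) x = 0 := by rw [hzero]; rfl
  have hBcx : (B *ᵥ c) x = (∑ y ∈ C, A x y) + (∑ y ∈ C, A y x) := by
    simp only [mulVec, dotProduct, hsumc', hB, Matrix.add_apply, transpose_apply]
    rw [Finset.sum_add_distrib]
  have hzx : z x = -α := by
    rw [hz]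
    simp only [Pi.sub_apply, Pi.smul_apply, smul_eq_mul, hc, hone]
    simp [hx]
  have hBzx : (B *ᵥ z) x = (∑ y ∈ C, A x y) + (∑ y ∈ C, A y x) - α * (2*k) := by
    rw [e2, hBone]
    simp only [Pi.sub_apply, Pi.smul_apply, smul_eq_mul, hBcx, hBone, hone]
    ring
  have heval2 : (Bτ *ᵥ z) x = (B *ᵥ z) x - (2*θmin) * z x := by
    have e1 : Bτ *ᵥ z = B *ᵥ z - (2*θmin) • z := by
      rw [hBτ, sub_mulVec, smul_mulVec, one_mulVec, hB]
    rw [e1]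
    simp only [Pi.sub_apply, Pi.smul_apply, smul_eq_mul]
  rw [heval2, hBzx, hzx] at heval
  -- conclude
  nlinarith [heval, hα2]
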